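/- Let A = ⊕_{i∈ℕ} A_i be an ℕ-graded ℂ-algebra that is a domain with A_0 = ℂ, generated by A_1, and suppose that for each generator x_i of A_1 there exist 0 ≠ a ∈ A homogeneous and a scalar λ ≠ 1 with x_i a = λ a x_i. Then every ℂ-algebra automorphism σ of A does not decrease degrees: for x a nonzero homogeneous element of degree d, σ(x) = y_d + y_{>d} with y_d ∈ A_d nonzero and y_{>d} ∈ ⊕_{i≥d+1} A_i. -/

import Mathlib

open DirectSum

set_option maxHeartbeats 1000000

section Aux
variable {A : Type*} [Ring A] [Algebra ℂ A]
variable (𝒜 : ℕ → Submodule ℂ A) [GradedAlgebra 𝒜]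

/-- Projection to the degree `k` component, as a linear map into `A`. -/
noncomputable def auxProj (k : ℕ) : A →ₗ[ℂ] A where
  toFun u := (DirectSum.decompose 𝒜 u k : A)
  map_add' u v := by
    dsimp only; rw [DirectSum.decompose_add, DirectSum.add_apply, Submodule.coe_add]
  map_smul' c u := by
    dsimp only
    rw [DirectSum.decompose_smul, DFinsupp.smul_apply, Submodule.coe_smul, RingHom.id_apply]

@[simp] lemma auxProj_apply (k : ℕ) (u : A) :
    auxProj 𝒜 k u = (DirectSum.decompose 𝒜 u k : A) := rfl

/-- Elements of degree at least `d`. -/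
noncomputable def auxF (d : ℕ) : Submodule ℂ A := ⨆ i, ⨆ _ : d ≤ i, 𝒜 i

lemma aux_mem_F_iff (d : ℕ) (u : A) :
    u ∈ auxF 𝒜 d ↔ ∀ k, k < d → (DirectSum.decompose 𝒜 u k : A) = 0 := by
  classical
  constructor
  · intro hu k hk
    have hle : auxF 𝒜 d ≤ LinearMap.ker (auxProj 𝒜 k) := by
      refine iSup₂_le fun i hi => fun v hv => ?_
      simp only [LinearMap.mem_ker, auxProj_apply]
      exact DirectSum.decompose_of_mem_ne 𝒜 hv (by omega : i ≠ k)
    simpa using hle hu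
  · intro h
    have h2 : (∑ k ∈ (DirectSum.decompose 𝒜 u).support, (DirectSum.decompose 𝒜 u k : A))
        ∈ auxF 𝒜 d := by
      refine Submodule.sum_mem _ fun k hk => ?_
      have hdk : d ≤ k := by
        by_contra hlt
        push_neg at hlt
        exact DFinsupp.mem_support_iff.mp hk (Subtype.ext (h k hlt))
      exact Submodule.mem_iSup_of_mem k
        (Submodule.mem_iSup_of_mem hdk (DirectSum.decompose 𝒜 u k).2)
    rwa [DirectSum.sum_support_decompose 𝒜 u] at h2

lemma aux_bot_mul (u v : A) (p q : ℕ)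
    (hu : ∀ k, k < p → (DirectSum.decompose 𝒜 u k : A) = 0)
    (hv : ∀ k, k < q → (DirectSum.decompose 𝒜 v k : A) = 0) :
    (DirectSum.decompose 𝒜 (u * v) (p + q) : A) =
      (DirectSum.decompose 𝒜 u p : A) * (DirectSum.decompose 𝒜 v q : A) := by
  classical
  rw [DirectSum.decompose_mul, DirectSum.coe_mul_apply]
  rw [Finset.sum_eq_single (p, q)]
  · rintro ⟨i, j⟩ hij hne
    simp only [Finset.mem_filter, Finset.mem_product, DFinsupp.mem_support_iff] at hij
    obtain ⟨⟨hi, hj⟩, hsum⟩ := hij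
    have hne' : ¬(i = p ∧ j = q) := by
      rintro ⟨rfl, rfl⟩; exact hne rfl
    rcases Nat.lt_or_ge i p with h | h
    · rw [hu i h, zero_mul]
    · rw [hv j (by omega), mul_zero]
  · intro hnm
    by_cases h1 : (DirectSum.decompose 𝒜 u p : A) = 0
    · rw [h1, zero_mul]
    by_cases h2 : (DirectSum.decompose 𝒜 v q : A) = 0
    · rw [h2, mul_zero]
    simp only [Finset.mem_filter, Finset.mem_product, DFinsupp.mem_support_iff] at hnm
    exact (hnm ⟨⟨fun h => h1 (by rw [h]; rfl), fun h => h2 (by rw [h]; rfl)⟩, trivial⟩).elim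

lemma aux_F_mul {d e : ℕ} {u v : A}
    (hu : ∀ k, k < d → (DirectSum.decompose 𝒜 u k : A) = 0)
    (hv : ∀ k, k < e → (DirectSum.decompose 𝒜 v k : A) = 0) :
    ∀ k, k < d + e → (DirectSum.decompose 𝒜 (u * v) k : A) = 0 := by
  classical
  intro k hk
  rw [DirectSum.decompose_mul, DirectSum.coe_mul_apply]
  refine Finset.sum_eq_zero ?_
  rintro ⟨i, j⟩ hij
  simp only [Finset.mem_filter, Finset.mem_product] at hij
  rcases Nat.lt_or_ge i d with h | h
  · rw [hu i h, zero_mul]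
  · rw [hv j (by omega), mul_zero]

lemma aux_pow_le (k : ℕ) : (𝒜 1) ^ k ≤ 𝒜 k := by
  induction k with
  | zero =>
      rw [pow_zero, Submodule.one_le]
      exact SetLike.one_mem_graded 𝒜
  | succ k ih =>
      rw [pow_succ]
      refine le_trans (mul_le_mul' ih le_rfl) ?_
      exact Submodule.mul_le.mpr fun m hm n hn => SetLike.mul_mem_graded hm hn

omit [GradedAlgebra 𝒜] in
lemma aux_top (hgen : Algebra.adjoin ℂ (𝒜 1 : Set A) = ⊤) (z : A) :
    z ∈ ⨆ k : ℕ, (𝒜 1 : Submodule ℂ A) ^ k := by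
  set T : Submodule ℂ A := ⨆ k : ℕ, (𝒜 1 : Submodule ℂ A) ^ k with hT
  have h1 : (1 : A) ∈ T :=
    Submodule.mem_iSup_of_mem 0 (by rw [pow_zero]; exact Submodule.one_le.mp le_rfl)
  have hmul : ∀ a b : A, a ∈ T → b ∈ T → a * b ∈ T := by
    have : T * T ≤ T := by
      rw [hT, Submodule.iSup_mul]
      refine iSup_le fun i => ?_
      rw [Submodule.mul_iSup]
      refine iSup_le fun j => ?_
      rw [← pow_add]
      exact le_iSup (fun k => (𝒜 1 : Submodule ℂ A) ^ k) (i + j)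
    exact fun a b ha hb => this (Submodule.mul_mem_mul ha hb)
  let Sb : Subalgebra ℂ A := Submodule.toSubalgebra T h1 hmul
  have hle : Algebra.adjoin ℂ (𝒜 1 : Set A) ≤ Sb := by
    refine Algebra.adjoin_le ?_
    intro w hw
    exact Submodule.mem_iSup_of_mem 1 (by rw [pow_one]; exact hw)
  have : z ∈ Algebra.adjoin ℂ (𝒜 1 : Set A) := by rw [hgen]; exact Algebra.mem_top
  exact hle this

lemma aux_deg_one_gen (hgen : Algebra.adjoin ℂ (𝒜 1 : Set A) = ⊤)
    {d : ℕ} {z : A} (hz : z ∈ 𝒜 d) : z ∈ (𝒜 1 : Submodule ℂ A) ^ d := by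
  have hzT := aux_top 𝒜 hgen z
  have key : (DirectSum.decompose 𝒜 z d : A) ∈ (𝒜 1 : Submodule ℂ A) ^ d := by
    refine Submodule.iSup_induction' (p := fun k : ℕ => (𝒜 1 : Submodule ℂ A) ^ k)
      (motive := fun w _ => (DirectSum.decompose 𝒜 w d : A) ∈ (𝒜 1 : Submodule ℂ A) ^ d)
      ?_ ?_ ?_ hzT
    · intro k w hw
      by_cases hkd : k = d
      · subst hkd
        rw [DirectSum.decompose_of_mem_same 𝒜 (aux_pow_le 𝒜 k hw)]
        exact hw
      · rw [DirectSum.decompose_of_mem_ne 𝒜 (aux_pow_le 𝒜 k hw) hkd]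
        exact zero_mem _
    · simp
    · intro w₁ w₂ h₁ h₂ hw₁ hw₂
      rw [DirectSum.decompose_add, DirectSum.add_apply, Submodule.coe_add]
      exact add_mem hw₁ hw₂
  rwa [DirectSum.decompose_of_mem_same 𝒜 hz] at key

end Aux

/-- Automorphisms of a connected `ℕ`-graded `ℂ`-algebra domain with enough `q`-commutation
relations do not decrease degrees. -/
theorem stmt5 (A : Type*) [Ring A] [IsDomain A] [Algebra ℂ A]
    (𝒜 : ℕ → Submodule ℂ A) (hgr : GradedAlgebra 𝒜)
    (hconn : (𝒜 0 : Set A) = Set.range (algebraMap ℂ A))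
    (hgen : Algebra.adjoin ℂ (𝒜 1 : Set A) = ⊤)
    (n : ℕ) (x : Fin n → A) (hx : ∀ i, x i ∈ 𝒜 1)
    (hspan : Submodule.span ℂ (Set.range x) = 𝒜 1)
    (hqcomm : ∀ i, ∃ d : ℕ, ∃ a ∈ 𝒜 d, a ≠ 0 ∧
      ∃ lam : ℂ, lam ≠ 1 ∧ x i * a = lam • (a * x i)) :
    ∀ σ : A ≃ₐ[ℂ] A, ∀ d : ℕ, ∀ z ∈ 𝒜 d, z ≠ 0 →
      ∃ y ∈ 𝒜 d, y ≠ 0 ∧ σ z - y ∈ (⨆ i : ℕ, ⨆ _ : d < i, 𝒜 i) := by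
  classical
  haveI := hgr
  -- Step A (generators): the degree-0 component of `τ (x i)` vanishes.
  have hgenA : ∀ (τ : A ≃ₐ[ℂ] A) (i : Fin n),
      (DirectSum.decompose 𝒜 (τ (x i)) 0 : A) = 0 := by
    intro τ i
    by_contra hb
    obtain ⟨dg, a, ha, ha0, lam, hlam1, hrel⟩ := hqcomm i
    set u := τ (x i) with hudef
    set w := τ a with hwdef
    have hw0 : w ≠ 0 := fun h => ha0 (τ.injective (by rw [map_zero]; exact h))
    have hex : ∃ k, (DirectSum.decompose 𝒜 w k : A) ≠ 0 := by
      by_contra hc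
      push_neg at hc
      apply hw0
      have h2 := DirectSum.sum_support_decompose 𝒜 w
      rw [← h2]
      exact Finset.sum_eq_zero fun k _ => hc k
    set q := Nat.find hex with hqdef
    have hq : (DirectSum.decompose 𝒜 w q : A) ≠ 0 := Nat.find_spec hex
    have hqmin : ∀ k, k < q → (DirectSum.decompose 𝒜 w k : A) = 0 :=
      fun k hk => not_not.mp (Nat.find_min hex hk)
    have hrel' : u * w = lam • (w * u) := by
      have := congrArg τ hrel
      simpa [map_mul, map_smul] using this
    have h1 := aux_bot_mul 𝒜 u w 0 q (fun k hk => absurd hk (Nat.not_lt_zero k)) hqmin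
    have h2 := aux_bot_mul 𝒜 w u q 0 hqmin (fun k hk => absurd hk (Nat.not_lt_zero k))
    set b := (DirectSum.decompose 𝒜 u 0 : A) with hbdef
    set wq := (DirectSum.decompose 𝒜 w q : A) with hwqdef
    have hbmem : b ∈ (𝒜 0 : Set A) := (DirectSum.decompose 𝒜 u 0).2
    rw [hconn] at hbmem
    obtain ⟨c, hc⟩ := hbmem
    have key : b * wq = lam • (wq * b) := by
      have h3 : (DirectSum.decompose 𝒜 (u * w) (0 + q) : A)
          = (DirectSum.decompose 𝒜 (lam • (w * u)) (0 + q) : A) := by rw [hrel']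
      rw [h1, DirectSum.decompose_smul, DFinsupp.smul_apply, Submodule.coe_smul] at h3
      have h4 : (0 : ℕ) + q = q + 0 := by omega
      rw [h4, h2] at h3
      exact h3
    have hcomm : wq * b = b * wq := by
      rw [← hc]
      exact (Algebra.commutes c wq).symm
    have hm0 : b * wq ≠ 0 := mul_ne_zero hb hq
    have heq : b * wq = lam • (b * wq) := by
      calc b * wq = lam • (wq * b) := key
        _ = lam • (b * wq) := by rw [hcomm]
    have hz0 : (1 - lam) • (b * wq) = 0 := by
      rw [sub_smul, one_smul, ← heq, sub_self]
    rw [Algebra.smul_def] at hz0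
    rcases mul_eq_zero.mp hz0 with h | h
    · refine sub_ne_zero.mpr (Ne.symm hlam1) ?_
      exact (algebraMap ℂ A).injective (by rw [map_zero]; exact h)
    · exact hm0 h
  -- Step A': same for any element of degree 1.
  have hA : ∀ (τ : A ≃ₐ[ℂ] A) (v : A), v ∈ 𝒜 1 →
      ∀ k, k < 1 → (DirectSum.decompose 𝒜 (τ v) k : A) = 0 := by
    intro τ v hv k hk
    have hk0 : k = 0 := by omega
    subst hk0
    have hker : 𝒜 1 ≤ LinearMap.ker ((auxProj 𝒜 0).comp τ.toLinearMap) := by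
      rw [← hspan, Submodule.span_le]
      rintro _ ⟨i, rfl⟩
      simp only [SetLike.mem_coe, LinearMap.mem_ker, LinearMap.comp_apply, auxProj_apply,
        AlgEquiv.toLinearMap_apply]
      exact hgenA τ i
    simpa using hker hv
  -- Step C1: automorphisms do not decrease degrees of homogeneous elements.
  have hC1 : ∀ (τ : A ≃ₐ[ℂ] A) (k : ℕ) (w : A), w ∈ (𝒜 1 : Submodule ℂ A) ^ k →
      ∀ j, j < k → (DirectSum.decompose 𝒜 (τ w) j : A) = 0 := by
    intro τ k
    induction k with
    | zero => exact fun w _ j hj => absurd hj (Nat.not_lt_zero j)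
    | succ k ih =>
        intro w hw
        rw [pow_succ] at hw
        refine Submodule.mul_induction_on
          (C := fun w => ∀ j, j < k + 1 → (DirectSum.decompose 𝒜 (τ w) j : A) = 0) hw ?_ ?_
        · intro m hm nn hnn j hj
          have h1 := ih m hm
          have h2 := hA τ nn hnn
          have h3 := aux_F_mul 𝒜 h1 h2 j hj
          rw [map_mul]
          exact h3
        · intro a1 a2 h1 h2 j hj
          rw [map_add, DirectSum.decompose_add, DirectSum.add_apply, Submodule.coe_add,
            h1 j hj, h2 j hj, add_zero]
  -- Step C: automorphisms preserve the "degree ≥ e" submodules.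
  have hC : ∀ (τ : A ≃ₐ[ℂ] A) (e : ℕ) (u : A), u ∈ auxF 𝒜 e → τ u ∈ auxF 𝒜 e := by
    intro τ e u hu
    rw [aux_mem_F_iff] at hu ⊢
    intro j hj
    have hrepr : τ u = ∑ k ∈ (DirectSum.decompose 𝒜 u).support,
        τ (DirectSum.decompose 𝒜 u k : A) := by
      rw [← map_sum, DirectSum.sum_support_decompose 𝒜 u]
    have : auxProj 𝒜 j (τ u) = 0 := by
      rw [hrepr, map_sum]
      refine Finset.sum_eq_zero fun k hk => ?_
      have hek : e ≤ k := by
        by_contra hlt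
        push_neg at hlt
        exact DFinsupp.mem_support_iff.mp hk (Subtype.ext (hu k hlt))
      have hmem : ((DirectSum.decompose 𝒜 u k : A)) ∈ (𝒜 1 : Submodule ℂ A) ^ k :=
        aux_deg_one_gen 𝒜 hgen (DirectSum.decompose 𝒜 u k).2
      simpa using hC1 τ k _ hmem j (by omega)
    simpa using this
  -- Main argument.
  intro σ d z hz hz0
  have hσz : ∀ k, k < d → (DirectSum.decompose 𝒜 (σ z) k : A) = 0 :=
    hC1 σ d z (aux_deg_one_gen 𝒜 hgen hz)
  set y := (DirectSum.decompose 𝒜 (σ z) d : A) with hydef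
  have hy : y ∈ 𝒜 d := (DirectSum.decompose 𝒜 (σ z) d).2
  have hEq : (⨆ i : ℕ, ⨆ _ : d < i, 𝒜 i) = auxF 𝒜 (d + 1) := by
    rw [auxF]
    exact iSup_congr fun i => iSup_congr_Prop (by omega) (fun _ => rfl)
  refine ⟨y, hy, ?_, ?_⟩
  · -- y ≠ 0
    intro hy0
    have hmem : σ z ∈ auxF 𝒜 (d + 1) := by
      rw [aux_mem_F_iff]
      intro k hk
      rcases Nat.lt_or_ge k d with h | h
      · exact hσz k h
      · have : k = d := by omega
        subst this
        rw [← hydef]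
        exact hy0
    have := hC σ.symm (d + 1) (σ z) hmem
    rw [AlgEquiv.symm_apply_apply] at this
    rw [aux_mem_F_iff] at this
    have hzz := this d (by omega)
    rw [DirectSum.decompose_of_mem_same 𝒜 hz] at hzz
    exact hz0 hzz
  · -- σ z - y lies in degrees > d
    rw [hEq, aux_mem_F_iff]
    intro k hk
    have hsub : (DirectSum.decompose 𝒜 (σ z - y) k : A)
        = (DirectSum.decompose 𝒜 (σ z) k : A) - (DirectSum.decompose 𝒜 y k : A) := by
      have := map_sub (auxProj 𝒜 k) (σ z) y
      simpa using this
    rw [hsub]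
    rcases Nat.lt_or_ge k d with h | h
    · rw [hσz k h, DirectSum.decompose_of_mem_ne 𝒜 hy (by omega : d ≠ k), sub_zero]
    · have : k = d := by omega
      subst this
      rw [DirectSum.decompose_of_mem_same 𝒜 hy, ← hydef, sub_self]
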